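/- The quotient R-module W/S is isomorphic to R/Ra_1. -/

import Mathlib

/-- Theorem `ws`: `W/S ≅ R/Ra₁`. Here `n = m + 1`. -/
theorem stmt_7 {R : Type*} [CommRing R] [IsDomain R]
    {K : Type*} [Field K] [Algebra R K] [IsFractionRing R K]
    {m : ℕ} (hm : 1 ≤ m) (a : Fin (m + 1) → R)
    (huni : Ideal.span (Set.range a) = ⊤) (ha1 : a 0 ≠ 0)
    (SF : Submodule R (Fin (m + 1) → K))
    (hSF : ∀ x, x ∈ SF ↔ (∀ i, ∃ r : R, algebraMap R K r = x i) ∧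
      ∑ i, algebraMap R K (a i) * x i = 0)
    (w : Fin m → Fin (m + 1) → K)
    (hw : ∀ j k, w j k =
      if k = 0 then -(algebraMap R K (a j.succ)) / algebraMap R K (a 0)
      else if k = j.succ then 1 else 0)
    (W : Submodule R (Fin (m + 1) → K))
    (hW : W = Submodule.span R (Set.range w))
    (hSW : SF ≤ W) :
    Nonempty ((W ⧸ Submodule.comap W.subtype SF) ≃ₗ[R]
      (R ⧸ Ideal.span {a 0})) := by
  classical
  set A := algebraMap R K with hAdef
  have hAinj : Function.Injective A := IsFractionRing.injective R K
  have hA0 : A (a 0) ≠ 0 := fun h => ha1 (hAinj (by simpa using h))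
  set T : (Fin m → R) →ₗ[R] (Fin (m + 1) → K) := Fintype.linearCombination R w with hTdef
  have hTapp : ∀ (c : Fin m → R) (k : Fin (m + 1)), T c k = ∑ j, c j • w j k := by
    intro c k
    rw [hTdef, Fintype.linearCombination_apply]
    simp [Finset.sum_apply]
  -- coordinates of T c
  have hTsucc : ∀ (c : Fin m → R) (i : Fin m), T c i.succ = A (c i) := by
    intro c i
    rw [hTapp]
    rw [Finset.sum_eq_single i]
    · rw [hw, if_neg (Fin.succ_ne_zero i), if_pos rfl, Algebra.smul_def, mul_one]
    · intro j _ hji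
      rw [hw, if_neg (Fin.succ_ne_zero i),
        if_neg (fun h => hji (Fin.succ_injective m h.symm)), smul_zero]
    · intro h; exact absurd (Finset.mem_univ i) h
  have hT0 : ∀ (c : Fin m → R),
      A (a 0) * T c 0 = - A (∑ j, c j * a j.succ) := by
    intro c
    rw [hTapp, Finset.mul_sum, map_sum, ← Finset.sum_neg_distrib]
    refine Finset.sum_congr rfl fun j _ => ?_
    rw [hw, if_pos rfl, Algebra.smul_def, map_mul]
    field_simp
    ring
  -- the automatic relation
  have hsum : ∀ (c : Fin m → R), ∑ i, A (a i) * T c i = 0 := by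
    intro c
    rw [Fin.sum_univ_succ, hT0]
    have : ∑ i : Fin m, A (a i.succ) * T c i.succ
        = A (∑ j, c j * a j.succ) := by
      rw [map_sum]
      refine Finset.sum_congr rfl fun j _ => ?_
      rw [hTsucc, map_mul, mul_comm]
    rw [this, neg_add_cancel]
  -- membership criterion
  have hmemSF : ∀ (c : Fin m → R),
      T c ∈ SF ↔ (∑ j, c j * a j.succ) ∈ Ideal.span {a 0} := by
    intro c
    rw [hSF]
    constructor
    · rintro ⟨hcoord, -⟩
      obtain ⟨r, hr⟩ := hcoord 0
      rw [Ideal.mem_span_singleton]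
      refine ⟨-r, ?_⟩
      apply hAinj
      have h2 := hT0 c
      rw [← hr] at h2
      rw [map_mul, map_neg]
      linear_combination h2
    · intro hs
      rw [Ideal.mem_span_singleton] at hs
      obtain ⟨t, ht⟩ := hs
      refine ⟨?_, hsum c⟩
      intro i
      refine Fin.cases ?_ ?_ i
      · refine ⟨-t, ?_⟩
        apply mul_left_cancel₀ hA0
        rw [hT0, ht, map_neg, map_mul]
        ring
      · intro j
        exact ⟨c j, (hTsucc c j).symm⟩
  -- T is injective with range W
  have hTinj : Function.Injective T := by
    intro c d h
    funext i
    apply hAinj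
    rw [← hTsucc c i, ← hTsucc d i, h]
  have hTrange : LinearMap.range T = W := by
    rw [hTdef, Fintype.range_linearCombination, hW]
  have hTmemW : ∀ c, T c ∈ W := fun c => hTrange ▸ LinearMap.mem_range_self T c
  -- the equivalence onto W
  set T' : (Fin m → R) →ₗ[R] W := T.codRestrict W hTmemW with hT'def
  have hT'bij : Function.Bijective T' := by
    constructor
    · intro c d h
      apply hTinj
      have := congrArg (Subtype.val) h
      simpa [hT'def, LinearMap.codRestrict_apply] using this
    · rintro ⟨x, hx⟩
      rw [← hTrange] at hx
      obtain ⟨c, hc⟩ := hx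
      exact ⟨c, Subtype.ext (by simpa [hT'def, LinearMap.codRestrict_apply] using hc)⟩
  set e : (Fin m → R) ≃ₗ[R] W := LinearEquiv.ofBijective T' hT'bij with hedef
  -- the quotient map
  set L : (Fin m → R) →ₗ[R] R := Fintype.linearCombination R (fun j => a j.succ) with hLdef
  have hLapp : ∀ c, L c = ∑ j, c j * a j.succ := by
    intro c
    rw [hLdef, Fintype.linearCombination_apply]
    simp [smul_eq_mul]
  set π : (Fin m → R) →ₗ[R] (R ⧸ Ideal.span {a 0}) :=
    (Ideal.span {a 0}).mkQ.comp L with hπdef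
  have hπsurj : Function.Surjective π := by
    intro x
    obtain ⟨r, rfl⟩ := Submodule.Quotient.mk_surjective _ x
    have h1 : (1 : R) ∈ Submodule.span R (Set.range a) := by
      rw [← Ideal.span]; rw [huni]; trivial
    rw [Submodule.mem_span_range_iff_exists_fun] at h1
    obtain ⟨c, hc⟩ := h1
    refine ⟨fun j => r * c j.succ, ?_⟩
    have h2 : c 0 * a 0 + ∑ j : Fin m, c j.succ * a j.succ = 1 := by
      rw [← hc, Fin.sum_univ_succ]
      simp [smul_eq_mul]
    have h3 : ∑ j : Fin m, r * c j.succ * a j.succ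
        = r * ∑ j : Fin m, c j.succ * a j.succ := by
      rw [Finset.mul_sum]
      exact Finset.sum_congr rfl fun j _ => by ring
    have key : r * (∑ j : Fin m, c j.succ * a j.succ) - r = -(r * c 0) * a 0 := by
      linear_combination r * h2
    have hLval : L (fun j => r * c j.succ) = ∑ j : Fin m, r * c j.succ * a j.succ := by
      rw [hLapp]
    rw [hπdef, LinearMap.comp_apply, Submodule.mkQ_apply, hLval, Submodule.Quotient.eq,
      h3, key]
    exact Ideal.mul_mem_left _ _ (Ideal.subset_span (Set.mem_singleton _))
  -- the kernel
  have hker : LinearMap.ker π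
      = (Submodule.comap W.subtype SF).comap (e : (Fin m → R) →ₗ[R] W) := by
    ext c
    rw [LinearMap.mem_ker, hπdef, LinearMap.comp_apply, Submodule.mkQ_apply,
      Submodule.Quotient.mk_eq_zero, hLapp]
    exact (hmemSF c).symm
  have hmap : (LinearMap.ker π).map (e : (Fin m → R) →ₗ[R] W)
      = Submodule.comap W.subtype SF := by
    rw [hker]
    exact Submodule.map_comap_eq_of_surjective e.surjective _
  exact ⟨(Submodule.Quotient.equiv (LinearMap.ker π)
    (Submodule.comap W.subtype SF) e hmap).symm.trans
    (π.quotKerEquivOfSurjective hπsurj)⟩
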